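/- Let (Ω, 𝒜, μ) be an atom-free σ-finite measure space and K ∈ (0, μ(Ω)). Then the convex subdifferential of |·|_K at 0 (with respect to L^1(Ω)) equals { s ∈ L^∞(Ω) : ‖s‖_∞ ≤ 1, ‖s‖_1 ≤ K }, and for 0 ≠ u ∈ L^1(Ω), ∂|·|_K(u) = { s ∈ L^∞(Ω) : max(‖s‖_∞, K^{-1}‖s‖_1) = 1 and ∫_Ω s u dμ = |u|_K }. -/

import Mathlib

open MeasureTheory Set
open scoped ENNReal

/-- The largest-K-norm: `|u|_K = sup { ∫_A |u| dμ : A measurable, μ(A) ≤ K }`. -/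
noncomputable def largestK {Ω : Type*} [MeasurableSpace Ω] (μ : Measure Ω) (K : ℝ≥0∞)
    (u : Ω → ℝ) : ℝ :=
  sSup {r : ℝ | ∃ A : Set Ω, MeasurableSet A ∧ μ A ≤ K ∧ r = ∫ x in A, |u x| ∂μ}

/-- A measure is atom-free if no measurable set `A` with `μ A > 0` is an atom. -/
def AtomFree {Ω : Type*} [MeasurableSpace Ω] (μ : Measure Ω) : Prop :=
  ∀ A : Set Ω, MeasurableSet A → 0 < μ A →
    ∃ B : Set Ω, MeasurableSet B ∧ B ⊆ A ∧ 0 < μ B ∧ 0 < μ (A \ B)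


section Helpers
open Filter
variable {Ω : Type*} [MeasurableSpace Ω] {μ : Measure Ω} {K : ℝ≥0∞} {v : Ω → ℝ}

lemma AtomFree.exists_pow (hμ : AtomFree μ) {A : Set Ω} (hA : MeasurableSet A)
    (h0 : 0 < μ A) (hfin : μ A ≠ ∞) (n : ℕ) :
    ∃ B : Set Ω, MeasurableSet B ∧ B ⊆ A ∧ 0 < μ B ∧ 2 ^ n * μ B ≤ μ A := by
  induction n with
  | zero => exact ⟨A, hA, subset_rfl, h0, by simp⟩
  | succ n ih =>
    obtain ⟨B, hBm, hBA, hB0, hBle⟩ := ih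
    have hBfin : μ B ≠ ∞ := by
      intro h
      rw [h, ENNReal.mul_top (by positivity)] at hBle
      exact hfin (top_le_iff.mp hBle)
    obtain ⟨C, hCm, hCB, hC0, hC0'⟩ := hμ B hBm hB0
    have hsum : μ C + μ (B \ C) = μ B := by
      have := measure_inter_add_diff B hCm (μ := μ)
      rwa [inter_eq_self_of_subset_right hCB] at this
    have hhalf : 2 * μ C ≤ μ B ∨ 2 * μ (B \ C) ≤ μ B := by
      by_contra h
      push_neg at h
      have h1 : μ B < 2 * μ C := h.1
      have h2 : μ B < 2 * μ (B \ C) := h.2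
      have : μ B + μ B < 2 * μ C + 2 * μ (B \ C) := ENNReal.add_lt_add h1 h2
      rw [← mul_add, hsum, two_mul] at this
      exact lt_irrefl _ this
    rcases hhalf with h | h
    · refine ⟨C, hCm, hCB.trans hBA, hC0, ?_⟩
      calc 2 ^ (n + 1) * μ C = 2 ^ n * (2 * μ C) := by ring
        _ ≤ 2 ^ n * μ B := by exact mul_le_mul_right h _
        _ ≤ μ A := hBle
    · refine ⟨B \ C, hBm.diff hCm, (diff_subset).trans hBA, hC0', ?_⟩
      calc 2 ^ (n + 1) * μ (B \ C) = 2 ^ n * (2 * μ (B \ C)) := by ring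
        _ ≤ 2 ^ n * μ B := by exact mul_le_mul_right h _
        _ ≤ μ A := hBle

lemma AtomFree.exists_small (hμ : AtomFree μ) {A : Set Ω} (hA : MeasurableSet A)
    (h0 : 0 < μ A) (hfin : μ A ≠ ∞) {ε : ℝ≥0∞} (hε : 0 < ε) :
    ∃ B : Set Ω, MeasurableSet B ∧ B ⊆ A ∧ 0 < μ B ∧ μ B ≤ ε := by
  obtain ⟨n, hn⟩ := ENNReal.exists_nat_mul_gt hε.ne' hfin
  obtain ⟨B, hBm, hBA, hB0, hBle⟩ := hμ.exists_pow hA h0 hfin n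
  refine ⟨B, hBm, hBA, hB0, ?_⟩
  have hn2 : (n : ℝ≥0∞) ≤ 2 ^ n := by
    calc (n : ℝ≥0∞) ≤ ((2 ^ n : ℕ) : ℝ≥0∞) := by exact_mod_cast (Nat.lt_two_pow_self).le
      _ = 2 ^ n := by push_cast; ring
  have : 2 ^ n * μ B ≤ 2 ^ n * ε := by
    calc 2 ^ n * μ B ≤ μ A := hBle
      _ ≤ (n : ℝ≥0∞) * ε := hn.le
      _ ≤ 2 ^ n * ε := mul_le_mul_left hn2 _
  exact (ENNReal.mul_le_mul_iff_right (by positivity) (by simp)).mp this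

lemma AtomFree.exists_measure_eq (hμ : AtomFree μ) {C : Set Ω} (hC : MeasurableSet C)
    (hfin : μ C ≠ ∞) {r : ℝ≥0∞} (hr : r ≤ μ C) :
    ∃ B : Set Ω, MeasurableSet B ∧ B ⊆ C ∧ μ B = r := by
  have hrfin : r ≠ ∞ := fun h => hfin (top_le_iff.mp (h ▸ hr))
  set P : Set Ω → Set Ω → Prop :=
    fun B D => MeasurableSet D ∧ D ⊆ C \ B ∧ μ D ≤ r - μ B with hP
  set δ : Set Ω → ℝ≥0∞ := fun B => ⨆ (D : Set Ω) (_ : P B D), μ D with hδ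
  have hstep : ∀ B : Set Ω, ∃ D : Set Ω, P B D ∧ δ B ≤ 2 * μ D := by
    intro B
    by_cases h0 : δ B = 0
    · exact ⟨∅, ⟨MeasurableSet.empty, empty_subset _, by simp⟩, by simp [h0]⟩
    · have hδle : δ B ≤ r := by
        refine iSup₂_le fun D hD => hD.2.2.trans tsub_le_self
      have hhalf : δ B / 2 < δ B :=
        ENNReal.half_lt_self h0 (fun h => hrfin (top_le_iff.mp (h ▸ hδle)))
      rw [hδ] at hhalf
      simp only [lt_iSup_iff] at hhalf
      obtain ⟨D, hPD, hD⟩ := hhalf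
      refine ⟨D, hPD, ?_⟩
      calc δ B = δ B / 2 + δ B / 2 := (ENNReal.add_halves _).symm
        _ ≤ μ D + μ D := add_le_add hD.le hD.le
        _ = 2 * μ D := (two_mul _).symm
  choose f hf using hstep
  set seq : ℕ → Set Ω := fun n => Nat.rec ∅ (fun _ B => B ∪ f B) n with hseq
  have hseq_succ : ∀ n, seq (n + 1) = seq n ∪ f (seq n) := fun n => rfl
  have hgood : ∀ n, MeasurableSet (seq n) ∧ seq n ⊆ C ∧ μ (seq n) ≤ r ∧
      μ (seq (n + 1)) = μ (seq n) + μ (f (seq n)) := by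
    intro n
    induction n with
    | zero =>
      have h := hf ∅
      refine ⟨MeasurableSet.empty, empty_subset _, by show μ (∅:Set Ω) ≤ r; simp, ?_⟩
      show μ (∅ ∪ f ∅) = μ ∅ + μ (f ∅)
      simp
    | succ n ih =>
      obtain ⟨hm, hsub, hle, hmeq⟩ := ih
      obtain ⟨⟨hfm, hfsub, hfle⟩, _⟩ := hf (seq n)
      have hdisj : Disjoint (seq n) (f (seq n)) :=
        (disjoint_sdiff_right.mono_right hfsub)
      have hm1 : MeasurableSet (seq (n + 1)) := by rw [hseq_succ]; exact hm.union hfm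
      have hsub1 : seq (n + 1) ⊆ C := by
        rw [hseq_succ]; exact union_subset hsub (hfsub.trans diff_subset)
      have hle1 : μ (seq (n + 1)) ≤ r := by
        rw [hmeq]
        calc μ (seq n) + μ (f (seq n)) ≤ μ (seq n) + (r - μ (seq n)) :=
          add_le_add_right hfle _
          _ = r := add_tsub_cancel_of_le hle
      refine ⟨hm1, hsub1, hle1, ?_⟩
      rw [hseq_succ (n+1)]
      rw [measure_union ?_ (hf (seq (n+1))).1.1]
      exact (disjoint_sdiff_right.mono_right (hf (seq (n+1))).1.2.1)
  have hmono : Monotone seq := monotone_nat_of_le_succ fun n => by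
    rw [hseq_succ]; exact subset_union_left
  have hBm : MeasurableSet (⋃ n, seq n) := MeasurableSet.iUnion fun n => (hgood n).1
  have hBsub : (⋃ n, seq n) ⊆ C := iUnion_subset fun n => (hgood n).2.1
  have hBle : μ (⋃ n, seq n) ≤ r := by
    rw [hmono.measure_iUnion]
    exact iSup_le fun n => (hgood n).2.2.1
  rcases eq_or_lt_of_le hBle with heq | hlt
  · exact ⟨_, hBm, hBsub, heq⟩
  · exfalso
    have hpos : 0 < μ (C \ ⋃ n, seq n) := by
      have h1 : r - μ (⋃ n, seq n) ≤ μ (C \ ⋃ n, seq n) :=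
        le_trans (tsub_le_tsub_right hr _) le_measure_diff
      exact lt_of_lt_of_le (tsub_pos_of_lt hlt) h1
    obtain ⟨D, hDm, hDsub, hD0, hDle⟩ := hμ.exists_small (hC.diff hBm) hpos
      (fun h => hfin (top_le_iff.mp (h ▸ measure_mono diff_subset))) (tsub_pos_of_lt hlt)
    set d := μ D / 2 with hd
    have hd0 : 0 < d := ENNReal.div_pos hD0.ne' (by simp)
    have key : ∀ n, d ≤ μ (f (seq n)) := by
      intro n
      have hPD : P (seq n) D := by
        refine ⟨hDm, hDsub.trans (diff_subset_diff_right (subset_iUnion seq n)), ?_⟩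
        exact hDle.trans (tsub_le_tsub_left (measure_mono (subset_iUnion seq n)) r)
      have h1 : μ D ≤ δ (seq n) := le_iSup₂ (f := fun D (_ : P (seq n) D) => μ D) D hPD
      have h2 : μ D ≤ μ (f (seq n)) * 2 := by
        rw [mul_comm]; exact h1.trans (hf (seq n)).2
      exact ENNReal.div_le_of_le_mul h2
    have growth : ∀ n : ℕ, (n : ℝ≥0∞) * d ≤ μ (seq n) := by
      intro n
      induction n with
      | zero => simp
      | succ n ih =>
        calc ((n + 1 : ℕ) : ℝ≥0∞) * d = (n : ℝ≥0∞) * d + d := by push_cast; ring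
          _ ≤ μ (seq n) + μ (f (seq n)) := add_le_add ih (key n)
          _ = μ (seq (n + 1)) := ((hgood n).2.2.2).symm
    obtain ⟨n, hn⟩ := ENNReal.exists_nat_mul_gt hd0.ne' hrfin
    exact absurd ((growth n).trans (hgood n).2.2.1) (not_le.mpr hn)

lemma largestK_set_nonempty :
    {r : ℝ | ∃ A : Set Ω, MeasurableSet A ∧ μ A ≤ K ∧ r = ∫ x in A, |v x| ∂μ}.Nonempty :=
  ⟨0, ∅, MeasurableSet.empty, by simp, by simp⟩

lemma largestK_set_bddAbove (hv : Integrable v μ) :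
    BddAbove {r : ℝ | ∃ A : Set Ω, MeasurableSet A ∧ μ A ≤ K ∧ r = ∫ x in A, |v x| ∂μ} := by
  refine ⟨∫ x, |v x| ∂μ, fun r hr => ?_⟩
  obtain ⟨A, hA, hAK, rfl⟩ := hr
  exact setIntegral_le_integral hv.abs (ae_of_all μ fun x => abs_nonneg _)

lemma le_largestK (hv : Integrable v μ) {A : Set Ω} (hA : MeasurableSet A) (hAK : μ A ≤ K) :
    (∫ x in A, |v x| ∂μ) ≤ largestK μ K v :=
  le_csSup (largestK_set_bddAbove hv) ⟨A, hA, hAK, rfl⟩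

lemma largestK_le {c : ℝ}
    (hc : ∀ A : Set Ω, MeasurableSet A → μ A ≤ K → (∫ x in A, |v x| ∂μ) ≤ c) :
    largestK μ K v ≤ c := by
  refine csSup_le largestK_set_nonempty fun r hr => ?_
  obtain ⟨A, hA, hAK, rfl⟩ := hr
  exact hc A hA hAK

lemma largestK_nonneg (hv : Integrable v μ) : 0 ≤ largestK μ K v := by
  have := le_largestK (μ := μ) (K := K) hv MeasurableSet.empty (by simp)
  simpa using this

lemma largestK_const_mul (hv : Integrable v μ) {c : ℝ} (hc : 0 ≤ c) :
    largestK μ K (fun x => c * v x) = c * largestK μ K v := by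
  have habs : ∀ x, |c * v x| = c * |v x| := fun x => by
    rw [abs_mul, abs_of_nonneg hc]
  rcases eq_or_lt_of_le hc with rfl | hcpos
  · simp only [zero_mul]
    refine le_antisymm (largestK_le fun A hA hAK => by simp) ?_
    have : (0:ℝ) ≤ largestK μ K (fun _ => (0:ℝ)) :=
      largestK_nonneg (integrable_zero _ _ _)
    simpa using this
  · refine le_antisymm (largestK_le fun A hA hAK => ?_) ?_
    · calc (∫ x in A, |c * v x| ∂μ) = c * ∫ x in A, |v x| ∂μ := by
            simp only [habs]; exact integral_const_mul c _
        _ ≤ c * largestK μ K v :=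
            mul_le_mul_of_nonneg_left (le_largestK hv hA hAK) hc
    · rw [mul_comm, ← le_div_iff₀ hcpos]
      refine largestK_le fun A hA hAK => ?_
      rw [le_div_iff₀ hcpos, mul_comm]
      calc c * ∫ x in A, |v x| ∂μ = ∫ x in A, |c * v x| ∂μ := by
            simp only [habs]; exact (integral_const_mul c _).symm
        _ ≤ largestK μ K (fun x => c * v x) := le_largestK (hv.const_mul c) hA hAK

lemma largestK_pos (hμ : AtomFree μ) (hK0 : 0 < K) (hKfin : K ≠ ∞) {u : Ω → ℝ}
    (hu : Integrable u μ) (hu0 : ¬ u =ᵐ[μ] 0) : 0 < largestK μ K u := by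
  set w := hu.1.mk u with hw
  have hwm : Measurable w := hu.1.stronglyMeasurable_mk.measurable
  have hweq : u =ᵐ[μ] w := hu.1.ae_eq_mk
  have hwint : Integrable w μ := hu.congr hweq
  have hw0 : ¬ w =ᵐ[μ] 0 := fun h => hu0 (hweq.trans h)
  have hne : 0 < μ {x | w x ≠ 0} := by
    rw [pos_iff_ne_zero]
    intro h
    exact hw0 (by rw [Filter.eventuallyEq_iff_exists_mem]; exact ⟨{x | w x ≠ 0}ᶜ, by rwa [mem_ae_iff, compl_compl], fun x hx => not_not.mp hx⟩)
  set E : ℕ → Set Ω := fun n => {x | (1:ℝ)/(n+1) < |w x|} with hE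
  have hEm : ∀ n, MeasurableSet (E n) := fun n =>
    measurableSet_lt measurable_const hwm.abs
  have hEmono : Monotone E := by
    intro n m hnm x hx
    have : (1:ℝ)/(m+1) ≤ 1/(n+1) := by
      apply one_div_le_one_div_of_le (by positivity) (by exact_mod_cast by omega)
    exact lt_of_le_of_lt this hx
  have hEU : (⋃ n, E n) = {x | w x ≠ 0} := by
    ext x
    simp only [mem_iUnion, hE, mem_setOf_eq]
    constructor
    · rintro ⟨n, hn⟩
      intro h
      rw [h, abs_zero] at hn
      exact absurd hn (show (0:ℝ) ≤ 1/(n+1) by positivity).not_gt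
    · intro h
      exact exists_nat_one_div_lt (abs_pos.mpr h)
  have : 0 < ⨆ n, μ (E n) := by
    rw [← Monotone.measure_iUnion hEmono, hEU]; exact hne
  obtain ⟨n, hn⟩ : ∃ n, 0 < μ (E n) := by
    by_contra h
    push_neg at h
    simp only [le_zero_iff] at h
    simp [h] at this
  have hEfin : μ (E n) ≠ ∞ := by
    have := hwint.measure_norm_gt_lt_top (ε := 1/(n+1)) (by positivity)
    simpa [hE, Real.norm_eq_abs] using this.ne
  obtain ⟨B, hBm, hBE, hB0, hBK⟩ :=
    hμ.exists_small (hEm n) hn hEfin (lt_min hK0 hn)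
  have hBK' : μ B ≤ K := hBK.trans (min_le_left _ _)
  have hBfin : μ B ≠ ∞ := (hBK.trans_lt (lt_of_le_of_lt (min_le_left _ _) hKfin.lt_top)).ne
  refine lt_of_lt_of_le ?_ (le_largestK hu hBm hBK')
  have h1 : (∫ x in B, |u x| ∂μ) = ∫ x in B, |w x| ∂μ :=
    integral_congr_ae (ae_restrict_of_ae (hweq.mono fun x hx => by simp only []; rw [hx]))
  rw [h1]
  have hint : IntegrableOn (fun x => |w x|) B μ := hwint.abs.integrableOn
  have h2 : (∫ x in B, (1:ℝ)/(n+1) ∂μ) ≤ ∫ x in B, |w x| ∂μ := by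
    refine setIntegral_mono_on (integrableOn_const hBfin) hint hBm ?_
    exact fun x hx => (hBE hx).le
  refine lt_of_lt_of_le ?_ h2
  rw [setIntegral_const, measureReal_def]
  have : 0 < (μ B).toReal := ENNReal.toReal_pos hB0.ne' hBfin
  positivity

/-- test function: `sgn(w)` on `F`, `0` elsewhere. -/
lemma test_fun {w : Ω → ℝ} (hwm : Measurable w) {F : Set Ω} (hF : MeasurableSet F)
    (hFfin : μ F ≠ ∞) :
    ∃ v : Ω → ℝ, Integrable v μ ∧ (∀ x, |v x| ≤ F.indicator (fun _ => (1:ℝ)) x) ∧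
      (∫ x, w x * v x ∂μ) = ∫ x in F, |w x| ∂μ := by
  set g : Ω → ℝ := fun x => if 0 ≤ w x then 1 else -1 with hg
  have hgm : Measurable g := Measurable.ite (measurableSet_le measurable_const hwm)
    measurable_const measurable_const
  have hg1 : ∀ x, |g x| = 1 := by
    intro x; by_cases hx : 0 ≤ w x <;> simp [hg, hx]
  refine ⟨F.indicator g, ?_, ?_, ?_⟩
  · rw [integrable_indicator_iff hF]
    exact Measure.integrableOn_of_bounded hFfin (hgm.aestronglyMeasurable) (ae_of_all _ fun x => by
      rw [Real.norm_eq_abs, hg1])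
  · intro x
    by_cases hx : x ∈ F
    · rw [indicator_of_mem hx, indicator_of_mem hx]
      exact (hg1 x).le
    · rw [indicator_of_notMem hx, indicator_of_notMem hx, abs_zero]
  · have heq : (fun x => w x * F.indicator g x) = F.indicator fun x => |w x| := by
      funext x
      by_cases hx : x ∈ F
      · rw [indicator_of_mem hx, indicator_of_mem hx]
        by_cases hw : 0 ≤ w x
        · simp [hg, hw, abs_of_nonneg hw]
        · push_neg at hw
          simp [hg, hw.not_ge, abs_of_neg hw]
      · simp [indicator_apply, hx]
    rw [heq, integral_indicator hF]

lemma largestK_indicator_le {v : Ω → ℝ} (hKfin : K ≠ ∞) {F : Set Ω} (hF : MeasurableSet F)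
    (hFfin : μ F ≠ ∞) (hv : Integrable v μ)
    (hbd : ∀ x, |v x| ≤ F.indicator (fun _ => (1:ℝ)) x) :
    largestK μ K v ≤ (min K (μ F)).toReal := by
  refine largestK_le fun A hA hAK => ?_
  have hAfin : μ A ≠ ∞ := (hAK.trans_lt hKfin.lt_top).ne
  have hind : Integrable (F.indicator fun _ => (1:ℝ)) μ := by
    rw [integrable_indicator_iff hF]
    exact integrableOn_const hFfin
  have h1 : (∫ x in A, |v x| ∂μ) ≤ ∫ x in A, F.indicator (fun _ => (1:ℝ)) x ∂μ :=
    setIntegral_mono_on hv.abs.integrableOn hind.integrableOn hA fun x _ => hbd x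
  have h2 : (∫ x in A, F.indicator (fun _ => (1:ℝ)) x ∂μ) = (μ (A ∩ F)).toReal := by
    rw [setIntegral_indicator hF, setIntegral_const, smul_eq_mul, mul_one, measureReal_def]
  have h3 : μ (A ∩ F) ≤ min K (μ F) :=
    le_min ((measure_mono inter_subset_left).trans hAK) (measure_mono inter_subset_right)
  refine h1.trans (le_of_eq h2 |>.trans ?_)
  exact ENNReal.toReal_mono (by simp [hKfin]) h3

lemma part1_fwd [SigmaFinite μ] (hμ : AtomFree μ) (hK0 : 0 < K) (hKfin : K ≠ ∞)
    {s : Ω → ℝ} (hs : AEStronglyMeasurable s μ) (hsfin : eLpNorm s ∞ μ ≠ ∞)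
    (h : ∀ v : Ω → ℝ, Integrable v μ → (∫ x, s x * v x ∂μ) ≤ largestK μ K v) :
    eLpNorm s ∞ μ ≤ 1 ∧ (∫⁻ x, ‖s x‖₊ ∂μ) ≤ K := by
  set w := hs.mk s with hw
  have hwm : Measurable w := hs.stronglyMeasurable_mk.measurable
  have hweq : s =ᵐ[μ] w := hs.ae_eq_mk
  have hwe : eLpNorm w ∞ μ = eLpNorm s ∞ μ := eLpNorm_congr_ae hweq.symm
  have hwfin : eLpNormEssSup w μ ≠ ∞ := by
    rw [← eLpNorm_exponent_top, hwe]; exact hsfin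
  have hwbd : ∀ᵐ x ∂μ, ‖w x‖ ≤ (eLpNormEssSup w μ).toReal := by
    filter_upwards [ae_le_eLpNormEssSup (f := w) (μ := μ)] with x hx
    have := ENNReal.toReal_mono hwfin hx
    simpa using this
  have hint : ∀ {F : Set Ω}, MeasurableSet F → μ F ≠ ∞ → IntegrableOn (fun x => |w x|) F μ := by
    intro F hF hFfin
    refine Measure.integrableOn_of_bounded (M := (eLpNormEssSup w μ).toReal) hFfin
      (hwm.abs.aestronglyMeasurable) ?_
    refine ae_restrict_of_ae (hwbd.mono fun x hx => ?_)
    simpa using hx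
  -- the main test computation
  have key : ∀ {F : Set Ω}, MeasurableSet F → μ F ≠ ∞ →
      (∫ x in F, |w x| ∂μ) ≤ (min K (μ F)).toReal := by
    intro F hF hFfin
    obtain ⟨v, hvint, hvbd, hveq⟩ := test_fun hwm hF hFfin
    have hsv : (∫ x, s x * v x ∂μ) = ∫ x, w x * v x ∂μ :=
      integral_congr_ae (hweq.mono fun x hx => by show _ = _; simp only [hx])
    have := h v hvint
    rw [hsv, hveq] at this
    exact this.trans (largestK_indicator_le hKfin hF hFfin hvint hvbd)
  constructor
  · -- essSup ≤ 1
    by_contra h1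
    push_neg at h1
    rw [← hwe, eLpNorm_exponent_top] at h1
    obtain ⟨c, hc1, hc2⟩ := exists_between h1
    have hcfin : c ≠ ∞ := ne_top_of_lt hc2
    set G := {x | c < (‖w x‖₊ : ℝ≥0∞)} with hG
    have hGm : MeasurableSet G := by
      apply measurableSet_lt measurable_const
      exact measurable_coe_nnreal_ennreal.comp hwm.nnnorm
    have hG0 : 0 < μ G := by
      rw [pos_iff_ne_zero]
      intro h0
      have : ∀ᵐ x ∂μ, (‖w x‖₊ : ℝ≥0∞) ≤ c := by
        rw [ae_iff]
        convert h0 using 2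
        ext x; simp [hG, not_le]
      exact absurd (essSup_le_of_ae_le c this) (not_le.mpr hc2)
    -- find positive finite piece
    have hGU : (⋃ n, G ∩ spanningSets μ n) = G := by
      rw [← inter_iUnion, iUnion_spanningSets, inter_univ]
    obtain ⟨n, hn⟩ : ∃ n, 0 < μ (G ∩ spanningSets μ n) := by
      by_contra hcon
      push_neg at hcon
      simp only [le_zero_iff] at hcon
      have := Monotone.measure_iUnion (μ := μ)
        (fun i j hij => inter_subset_inter_right G (monotone_spanningSets μ hij))
      rw [hGU] at this
      rw [this] at hG0
      simp [hcon] at hG0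
    have hGFfin : μ (G ∩ spanningSets μ n) ≠ ∞ :=
      ((measure_mono inter_subset_right).trans_lt (measure_spanningSets_lt_top μ n)).ne
    obtain ⟨B, hBm, hBG, hB0, hBK⟩ :=
      hμ.exists_small (hGm.inter (measurableSet_spanningSets μ n)) hn hGFfin hK0
    have hBfin : μ B ≠ ∞ := (hBK.trans_lt hKfin.lt_top).ne
    have hB := key hBm hBfin
    have hmin : min K (μ B) = μ B := min_eq_right hBK
    rw [hmin] at hB
    -- but ∫_B |w| ≥ c.toReal * μ.real B > μ.real B
    have hc1R : 1 < c.toReal := by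
      have := (ENNReal.toReal_lt_toReal (by simp) hcfin).mpr hc1
      simpa using this
    have hlow : c.toReal * (μ B).toReal ≤ ∫ x in B, |w x| ∂μ := by
      have : (∫ x in B, (fun _ => c.toReal) x ∂μ) ≤ ∫ x in B, |w x| ∂μ := by
        refine setIntegral_mono_on (integrableOn_const hBfin)
          (hint hBm hBfin) hBm fun x hx => ?_
        have hxG : x ∈ G := (hBG hx).1
        have : c ≤ (‖w x‖₊ : ℝ≥0∞) := le_of_lt hxG
        have := ENNReal.toReal_mono (by simp) this
        simpa [Real.norm_eq_abs] using this
      rwa [setIntegral_const, measureReal_def, smul_eq_mul, mul_comm] at this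
    have hBpos : 0 < (μ B).toReal := ENNReal.toReal_pos hB0.ne' hBfin
    nlinarith [hB, hlow, hBpos, hc1R]
  · -- L¹ norm ≤ K
    by_contra h2
    push_neg at h2
    have h2w : K < ∫⁻ x, ‖w x‖₊ ∂μ := by
      rwa [lintegral_congr_ae (hweq.mono fun x hx => by rw [hx])] at h2
    set ν := μ.withDensity (fun x => (‖w x‖₊ : ℝ≥0∞)) with hν
    have hνapp : ∀ {F : Set Ω}, MeasurableSet F → ν F = ∫⁻ x in F, ‖w x‖₊ ∂μ := by
      intro F hF
      rw [hν, withDensity_apply _ hF]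
    obtain ⟨n, hn⟩ : ∃ n, K < ν (spanningSets μ n) := by
      by_contra hcon
      push_neg at hcon
      have hs' : ν univ = ⨆ n, ν (spanningSets μ n) := by
        conv_lhs => rw [← iUnion_spanningSets (μ := μ)]
        exact Monotone.measure_iUnion (fun i j hij => monotone_spanningSets μ hij)
      have hνuniv : K < ν univ := by
        rw [hν, withDensity_apply _ MeasurableSet.univ, Measure.restrict_univ]
        exact h2w
      rw [hs'] at hνuniv
      exact absurd (iSup_le hcon) (not_le.mpr hνuniv)
    have hFm := measurableSet_spanningSets μ n
    have hFfin := (measure_spanningSets_lt_top μ n).ne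
    rw [hνapp hFm] at hn
    have hlfin : (∫⁻ x in spanningSets μ n, (‖w x‖₊:ℝ≥0∞) ∂μ) ≠ ∞ := by
      have hb : (∫⁻ x in spanningSets μ n, (‖w x‖₊:ℝ≥0∞) ∂μ) ≤
          eLpNormEssSup w μ * μ (spanningSets μ n) := by
        calc (∫⁻ x in spanningSets μ n, (‖w x‖₊:ℝ≥0∞) ∂μ)
            ≤ ∫⁻ _ in spanningSets μ n, eLpNormEssSup w μ ∂μ :=
              lintegral_mono_ae (ae_restrict_of_ae ae_le_eLpNormEssSup)
          _ = eLpNormEssSup w μ * μ (spanningSets μ n) := by rw [setLIntegral_const]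
      exact (hb.trans_lt (ENNReal.mul_lt_top hwfin.lt_top hFfin.lt_top)).ne
    have hreal : (∫ x in spanningSets μ n, |w x| ∂μ) =
        (∫⁻ x in spanningSets μ n, (‖w x‖₊:ℝ≥0∞) ∂μ).toReal := by
      rw [integral_eq_lintegral_of_nonneg_ae (ae_of_all _ fun x => abs_nonneg _)
        (hwm.abs.aestronglyMeasurable.restrict)]
      congr 1
      refine lintegral_congr fun x => ?_
      rw [← Real.norm_eq_abs]; exact ofReal_norm_eq_enorm _
    have hub : (∫ x in spanningSets μ n, |w x| ∂μ) ≤ K.toReal :=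
      (key hFm hFfin).trans (ENNReal.toReal_mono hKfin (min_le_left _ _))
    have hlb : K.toReal < (∫⁻ x in spanningSets μ n, (‖w x‖₊:ℝ≥0∞) ∂μ).toReal :=
      (ENNReal.toReal_lt_toReal hKfin hlfin).mpr hn
    rw [hreal] at hub
    exact absurd hub (not_le.mpr hlb)

lemma part1_bwd (hμ : AtomFree μ) (hK0 : 0 < K) (hKfin : K ≠ ∞)
    {s : Ω → ℝ} (hs : AEStronglyMeasurable s μ)
    (h1 : eLpNorm s ∞ μ ≤ 1) (h2 : (∫⁻ x, ‖s x‖₊ ∂μ) ≤ K)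
    {v : Ω → ℝ} (hv : Integrable v μ) :
    (∫ x, s x * v x ∂μ) ≤ largestK μ K v := by
  have hsint : Integrable s μ := by
    refine ⟨hs, ?_⟩
    exact (hasFiniteIntegral_def s μ).mpr (h2.trans_lt hKfin.lt_top)
  have hsb : ∀ᵐ x ∂μ, |s x| ≤ 1 := by
    rw [eLpNorm_exponent_top] at h1
    filter_upwards [ae_le_eLpNormEssSup (f := s) (μ := μ)] with x hx
    have : (‖s x‖₊ : ℝ≥0∞) ≤ 1 := hx.trans h1
    have := ENNReal.toReal_mono (by simp) this
    simpa [Real.norm_eq_abs] using this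
  set w := hv.1.mk v with hwdef
  have hwm : Measurable w := hv.1.stronglyMeasurable_mk.measurable
  have hveq : v =ᵐ[μ] w := hv.1.ae_eq_mk
  have hwint : Integrable w μ := hv.congr hveq
  -- the threshold t
  set T : Set ℝ := {t : ℝ | 0 ≤ t ∧ μ {x | t < |w x|} ≤ K} with hT
  have hTne : T.Nonempty := by
    have hanti : Antitone fun n : ℕ => {x | (n : ℝ) < |w x|} := by
      intro n m hnm x hx
      simp only [mem_setOf_eq] at hx ⊢
      have hc : (n:ℝ) ≤ (m:ℝ) := by exact_mod_cast hnm
      linarith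
    have hiInter : (⋂ n : ℕ, {x | (n : ℝ) < |w x|}) = ∅ := by
      ext x
      simp only [mem_iInter, mem_setOf_eq, mem_empty_iff_false, iff_false, not_forall, not_lt]
      obtain ⟨n, hn⟩ := exists_nat_ge |w x|
      exact ⟨n, hn⟩
    have hfin1 : μ {x | (1 : ℝ) < |w x|} ≠ ∞ := by
      have := hwint.measure_norm_gt_lt_top (ε := 1) one_pos
      simpa [Real.norm_eq_abs] using this.ne
    have htend : Tendsto (fun n : ℕ => μ {x | (n : ℝ) < |w x|}) atTop (nhds 0) := by
      have := tendsto_measure_iInter_atTop (μ := μ)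
        (fun n : ℕ => ((measurableSet_lt measurable_const hwm.abs)).nullMeasurableSet)
        hanti ⟨1, by exact_mod_cast hfin1⟩
      rwa [hiInter, measure_empty] at this
    have := htend.eventually_lt_const hK0
    -- wrong direction: we need μ < K i.e. eventually (fun n => μ ... < K)
    obtain ⟨n, hn⟩ := this.exists
    exact ⟨n, by positivity, hn.le⟩
  have hTbdd : BddBelow T := ⟨0, fun x hx => hx.1⟩
  set t := sInf T with htdef
  have ht0 : 0 ≤ t := le_csInf hTne fun x hx => hx.1
  have hμt : μ {x | t < |w x|} ≤ K := by
    have hU : {x | t < |w x|} = ⋃ n : ℕ, {x | t + 1 / (n + 1) < |w x|} := by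
      ext x
      simp only [mem_setOf_eq, mem_iUnion]
      constructor
      · intro hx
        obtain ⟨n, hn⟩ := exists_nat_one_div_lt (sub_pos.mpr hx)
        exact ⟨n, by linarith⟩
      · rintro ⟨n, hn⟩
        have : (0:ℝ) < 1 / (n + 1) := by positivity
        linarith
    have hmono : Monotone fun n : ℕ => {x | t + 1 / ((n : ℝ) + 1) < |w x|} := by
      intro n m hnm x hx
      simp only [mem_setOf_eq] at hx ⊢
      have hcc : ((n:ℝ) + 1) ≤ ((m:ℝ) + 1) := by
        have : (n:ℝ) ≤ (m:ℝ) := by exact_mod_cast hnm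
        linarith
      have : (1:ℝ) / ((m:ℝ) + 1) ≤ 1 / ((n:ℝ) + 1) :=
        one_div_le_one_div_of_le (by positivity) hcc
      linarith
    rw [hU, Monotone.measure_iUnion hmono]
    refine iSup_le fun n => ?_
    have hlt : t < t + 1 / ((n:ℝ) + 1) := by
      have : (0:ℝ) < 1 / ((n:ℝ) + 1) := by positivity
      linarith
    obtain ⟨t', ht'T, ht'lt⟩ := exists_lt_of_csInf_lt hTne hlt
    refine le_trans (measure_mono fun x hx => ?_) ht'T.2
    exact lt_of_le_of_lt ht'lt.le hx
  -- key set A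
  obtain ⟨A, hAm, hAK, hAeq⟩ : ∃ A : Set Ω, MeasurableSet A ∧ μ A ≤ K ∧
      (∫ x, max (|w x| - t) 0 ∂μ) + t * K.toReal = ∫ x in A, |w x| ∂μ := by
    have hmaxint : Integrable (fun x => max (|w x| - t) 0) μ := by
      refine hwint.abs.mono' ?_ (ae_of_all _ fun x => ?_)
      · exact ((hwm.abs.sub measurable_const).max measurable_const).aestronglyMeasurable
      · rw [Real.norm_eq_abs, abs_of_nonneg (le_max_right _ _)]
        rcases le_total (|w x| - t) 0 with h | h
        · rw [max_eq_right h]; positivity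
        · rw [max_eq_left h]
          show |w x| - t ≤ |w x|
          linarith
    rcases eq_or_lt_of_le ht0 with ht | ht
    · -- t = 0
      refine ⟨{x | 0 < |w x|}, measurableSet_lt measurable_const hwm.abs, ?_, ?_⟩
      · have := hμt
        rw [← ht] at this
        exact this
      · rw [← ht]
        simp only [sub_zero, zero_mul, add_zero]
        have hmax : (fun x => max |w x| 0) = fun x => |w x| := by
          funext x; exact max_eq_left (abs_nonneg _)
        rw [hmax]
        rw [setIntegral_eq_integral_of_forall_compl_eq_zero fun x hx => ?_]
        simp only [mem_setOf_eq, not_lt] at hx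
        exact le_antisymm hx (abs_nonneg _)
    · -- t > 0
      set S : Set Ω := {x | t < |w x|} with hSdef
      set T' : Set Ω := {x | t ≤ |w x|} with hT'def
      have hSm : MeasurableSet S := measurableSet_lt measurable_const hwm.abs
      have hT'm : MeasurableSet T' := measurableSet_le measurable_const hwm.abs
      have hST : S ⊆ T' := fun x hx => show t ≤ |w x| from le_of_lt hx
      have hT'fin : μ T' ≠ ∞ := by
        have := hwint.measure_norm_ge_lt_top (ε := t) ht
        simpa [hT'def, Real.norm_eq_abs] using this.ne
      have hSK : μ S ≤ K := hμt
      have hSfin : μ S ≠ ∞ := (hSK.trans_lt hKfin.lt_top).ne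
      -- μ T' ≥ K
      have hKT' : K ≤ μ T' := by
        set c : ℕ → ℝ := fun n => t - t / (n + 2) with hc
        have hcpos : ∀ n, 0 < c n := by
          intro n
          have h1 : t / ((n:ℝ) + 2) ≤ t / 2 :=
            div_le_div_of_nonneg_left ht.le (by norm_num) (by exact_mod_cast by norm_num)
          have h2 : t / 2 < t := by linarith
          simp only [hc]
          linarith
        have hclt : ∀ n, c n < t := by
          intro n
          have : (0:ℝ) < t / (n + 2) := by positivity
          simp only [hc]; linarith
        have hcmono : Monotone c := by
          intro n m hnm
          simp only [hc]
          have : t / ((m:ℝ) + 2) ≤ t / ((n:ℝ) + 2) :=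
            div_le_div_of_nonneg_left ht.le (by positivity) (by exact_mod_cast by omega)
          linarith
        have hanti : Antitone fun n => {x | c n < |w x|} := fun n m hnm x hx =>
          lt_of_le_of_lt (hcmono hnm) hx
        have hiI : (⋂ n, {x | c n < |w x|}) = T' := by
          ext x
          simp only [mem_iInter, mem_setOf_eq, hT'def]
          constructor
          · intro hx
            by_contra hcon
            push_neg at hcon
            obtain ⟨n, hn⟩ := exists_nat_one_div_lt (div_pos (sub_pos.mpr hcon) ht)
            have h5 : t * (1 / ((n:ℝ)+1)) < t * ((t - |w x|) / t) :=
              mul_lt_mul_of_pos_left hn ht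
            have h6 : t * ((t - |w x|) / t) = t - |w x| := by field_simp
            rw [mul_one_div, h6] at h5
            have h7 : t / ((n:ℝ)+2) ≤ t / ((n:ℝ)+1) :=
              div_le_div_of_nonneg_left ht.le (by positivity) (by norm_num)
            have h8 := hx n
            simp only [hc, mem_setOf_eq] at h8
            linarith
          · intro hx n
            exact lt_of_lt_of_le (hclt n) hx
        have hfin0 : μ {x | c 0 < |w x|} ≠ ∞ := by
          have := hwint.measure_norm_gt_lt_top (ε := c 0) (hcpos 0)
          simpa [Real.norm_eq_abs] using this.ne
        have htend : Tendsto (fun n => μ {x | c n < |w x|}) atTop (nhds (μ T')) := by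
          have := tendsto_measure_iInter_atTop (μ := μ)
            (fun n => (measurableSet_lt measurable_const hwm.abs).nullMeasurableSet)
            hanti ⟨0, by exact_mod_cast hfin0⟩
          rwa [hiI] at this
        refine ge_of_tendsto' htend fun n => ?_
        by_contra hcon
        push_neg at hcon
        have : c n ∈ T := ⟨(hcpos n).le, hcon.le⟩
        exact absurd (csInf_le hTbdd this) (not_le.mpr (hclt n))
      -- Sierpinski
      have hdiff : K - μ S ≤ μ (T' \ S) := by
        have := le_measure_diff (μ := μ) (s₁ := T') (s₂ := S)
        exact le_trans (tsub_le_tsub_right hKT' _) this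
      obtain ⟨B, hBm, hBsub, hBμ⟩ := hμ.exists_measure_eq (hT'm.diff hSm)
        ((measure_mono diff_subset).trans_lt hT'fin.lt_top).ne hdiff
      have hdisj : Disjoint S B := disjoint_sdiff_right.mono_right hBsub
      have hAμ : μ (S ∪ B) = K := by
        rw [measure_union hdisj hBm, hBμ, add_tsub_cancel_of_le hSK]
      refine ⟨S ∪ B, hSm.union hBm, hAμ.le, ?_⟩
      have hsubT' : S ∪ B ⊆ T' := union_subset hST (hBsub.trans diff_subset)
      have hind : (fun x => max (|w x| - t) 0) = (S ∪ B).indicator fun x => |w x| - t := by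
        funext x
        by_cases hx : x ∈ S ∪ B
        · rw [indicator_of_mem hx]
          exact max_eq_left (sub_nonneg.mpr (hsubT' hx))
        · rw [indicator_of_notMem hx]
          refine max_eq_right (sub_nonpos.mpr ?_)
          have : x ∉ S := fun h => hx (Or.inl h)
          simpa [hSdef, not_lt] using this
      rw [hind, integral_indicator (hSm.union hBm)]
      have hAfin : μ (S ∪ B) ≠ ∞ := by rw [hAμ]; exact hKfin
      rw [integral_sub hwint.abs.integrableOn (integrableOn_const hAfin)]
      rw [setIntegral_const, measureReal_def, smul_eq_mul, hAμ]
      ring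
  -- final chain
  have hsvint : Integrable (fun x => s x * v x) μ :=
    hv.bdd_mul hs (hsb.mono fun x hx => by rwa [Real.norm_eq_abs])
  have step1 : (∫ x, s x * v x ∂μ) ≤ ∫ x, |s x * v x| ∂μ :=
    integral_mono_ae hsvint hsvint.abs (ae_of_all _ fun x => le_abs_self _)
  have step2 : (∫ x, |s x * v x| ∂μ) ≤ (∫ x, max (|v x| - t) 0 ∂μ) + t * K.toReal := by
    have hmaxint : Integrable (fun x => max (|v x| - t) 0) μ := by
      refine hv.abs.mono' ?_ (ae_of_all _ fun x => ?_)
      · have hm : AEStronglyMeasurable (fun x => max (|w x| - t) 0) μ :=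
          ((hwm.abs.sub measurable_const).max measurable_const).aestronglyMeasurable
        refine hm.congr ?_
        filter_upwards [hveq] with x hx
        rw [hx]
      · rw [Real.norm_eq_abs, abs_of_nonneg (le_max_right _ _)]
        rcases le_total (|v x| - t) 0 with h | h
        · rw [max_eq_right h]; positivity
        · rw [max_eq_left h]
          show |v x| - t ≤ |v x|
          linarith
    have htsint : Integrable (fun x => t * |s x|) μ := (hsint.abs.const_mul t)
    have hpt : ∀ᵐ x ∂μ, |s x * v x| ≤ max (|v x| - t) 0 + t * |s x| := by
      filter_upwards [hsb] with x hx
      have h0 : 0 ≤ |s x| := abs_nonneg _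
      rw [abs_mul]
      rcases le_total (|v x|) t with h | h
      · have : |s x| * |v x| ≤ t * |s x| := by nlinarith
        have hmax0 : (0:ℝ) ≤ max (|v x| - t) 0 := le_max_right _ _
        linarith
      · have h5 : |s x| * |v x| ≤ (|v x| - t) + t * |s x| := by nlinarith
        have : |v x| - t ≤ max (|v x| - t) 0 := le_max_left _ _
        linarith
    have hsum : Integrable (fun x => max (|v x| - t) 0 + t * |s x|) μ := hmaxint.add htsint
    have := integral_mono_ae hsvint.abs hsum hpt
    rw [integral_add hmaxint htsint] at this
    refine this.trans (add_le_add_right ?_ _)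
    have h6 : (∫ x, t * |s x| ∂μ) = t * ∫ x, |s x| ∂μ := integral_const_mul t _
    have h7 : (∫ x, |s x| ∂μ) ≤ K.toReal := by
      have habs : AEStronglyMeasurable (fun x => |s x|) μ := by
        simpa [Real.norm_eq_abs] using hs.norm
      rw [integral_eq_lintegral_of_nonneg_ae (ae_of_all _ fun x => abs_nonneg _) habs]
      refine ENNReal.toReal_mono hKfin (le_trans (le_of_eq (lintegral_congr fun x => ?_)) h2)
      rw [← Real.norm_eq_abs]; exact ofReal_norm_eq_enorm _
    rw [h6]
    exact mul_le_mul_of_nonneg_left h7 ht0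
  have step3 : (∫ x, max (|v x| - t) 0 ∂μ) = ∫ x, max (|w x| - t) 0 ∂μ :=
    integral_congr_ae (hveq.mono fun x hx => by simp only [hx])
  have step4 : (∫ x in A, |w x| ∂μ) = ∫ x in A, |v x| ∂μ :=
    integral_congr_ae (ae_restrict_of_ae (hveq.mono fun x hx => by simp only [hx]))
  calc ∫ x, s x * v x ∂μ ≤ ∫ x, |s x * v x| ∂μ := step1
    _ ≤ (∫ x, max (|v x| - t) 0 ∂μ) + t * K.toReal := step2
    _ = (∫ x, max (|w x| - t) 0 ∂μ) + t * K.toReal := by rw [step3]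
    _ = ∫ x in A, |w x| ∂μ := hAeq
    _ = ∫ x in A, |v x| ∂μ := step4
    _ ≤ largestK μ K v := le_largestK hv hAm hAK

lemma linfty_mul_integrable {s : Ω → ℝ}
    (hs : AEStronglyMeasurable s μ) (hsfin : eLpNorm s ∞ μ ≠ ∞)
    {u : Ω → ℝ} (hu : Integrable u μ) : Integrable (fun x => s x * u x) μ := by
  refine hu.bdd_mul (c := (eLpNormEssSup s μ).toReal) hs ?_
  rw [eLpNorm_exponent_top] at hsfin
  filter_upwards [ae_le_eLpNormEssSup (f := s) (μ := μ)] with x hx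
  have := ENNReal.toReal_mono hsfin hx
  simpa using this

end Helpers

/-- in an atom-free σ-finite space, identifying `(L¹)' = L^∞`, the convex
subdifferential of `|·|_K` at `0` is `{ s ∈ L^∞ : ‖s‖_∞ ≤ 1, ‖s‖₁ ≤ K }`, and at
`u ≠ 0` it is `{ s ∈ L^∞ : max(‖s‖_∞, K⁻¹‖s‖₁) = 1, ∫ s u dμ = |u|_K }`. -/
theorem stmt12 {Ω : Type*} [MeasurableSpace Ω] (μ : Measure Ω) [SigmaFinite μ]
    (hμ : AtomFree μ) (K : ℝ≥0∞) (hK0 : 0 < K) (hK : K < μ Set.univ) :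
    (∀ s : Lp ℝ ∞ μ,
      (∀ v : Ω → ℝ, Integrable v μ →
          (∫ x, s x * v x ∂μ) ≤ largestK μ K v) ↔
        (eLpNorm (s : Ω → ℝ) ∞ μ ≤ 1 ∧ (∫⁻ x, ‖(s : Ω → ℝ) x‖₊ ∂μ) ≤ K)) ∧
    (∀ u : Ω → ℝ, Integrable u μ → ¬ (u =ᵐ[μ] 0) →
      ∀ s : Lp ℝ ∞ μ,
        (∀ v : Ω → ℝ, Integrable v μ →
            largestK μ K v - largestK μ K u ≥ ∫ x, s x * (v x - u x) ∂μ) ↔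
          (max (eLpNorm (s : Ω → ℝ) ∞ μ) (K⁻¹ * ∫⁻ x, ‖(s : Ω → ℝ) x‖₊ ∂μ) = 1 ∧
            (∫ x, s x * u x ∂μ) = largestK μ K u)) := by
  have hKfin : K ≠ ∞ := ne_top_of_lt hK
  have part1 : ∀ s : Lp ℝ ∞ μ,
      (∀ v : Ω → ℝ, Integrable v μ → (∫ x, s x * v x ∂μ) ≤ largestK μ K v) ↔
        (eLpNorm (s : Ω → ℝ) ∞ μ ≤ 1 ∧ (∫⁻ x, ‖(s : Ω → ℝ) x‖₊ ∂μ) ≤ K) := by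
    intro s
    constructor
    · exact fun h => part1_fwd hμ hK0 hKfin (Lp.aestronglyMeasurable s) (Lp.eLpNorm_lt_top s).ne h
    · exact fun h v hv => part1_bwd hμ hK0 hKfin (Lp.aestronglyMeasurable s) h.1 h.2 hv
  refine ⟨part1, fun u hu hu0 s => ?_⟩
  have hsm : AEStronglyMeasurable ((s : Ω → ℝ)) μ := Lp.aestronglyMeasurable s
  have hsfin : eLpNorm ((s : Ω → ℝ)) ∞ μ ≠ ∞ := (Lp.eLpNorm_lt_top s).ne
  have hsu : Integrable (fun x => (s : Ω → ℝ) x * u x) μ := linfty_mul_integrable hsm hsfin hu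
  have hupos : 0 < largestK μ K u := largestK_pos hμ hK0 hKfin hu hu0
  have hsplit : ∀ v : Ω → ℝ, Integrable v μ →
      (∫ x, (s : Ω → ℝ) x * (v x - u x) ∂μ) =
        (∫ x, (s : Ω → ℝ) x * v x ∂μ) - ∫ x, (s : Ω → ℝ) x * u x ∂μ := by
    intro v hv
    have hsv : Integrable (fun x => (s : Ω → ℝ) x * v x) μ := linfty_mul_integrable hsm hsfin hv
    rw [← integral_sub hsv hsu]
    exact integral_congr_ae (ae_of_all _ fun x => by ring)
  constructor
  · intro h
    have h0 := h (fun x => 0 * u x) (hu.const_mul 0)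
    have h2 := h (fun x => 2 * u x) (hu.const_mul 2)
    rw [ge_iff_le, hsplit _ (hu.const_mul 0),
      largestK_const_mul hu (by norm_num : (0:ℝ) ≤ 0)] at h0
    rw [ge_iff_le, hsplit _ (hu.const_mul 2),
      largestK_const_mul hu (by norm_num : (0:ℝ) ≤ 2)] at h2
    have e0 : (∫ x, (s : Ω → ℝ) x * (0 * u x) ∂μ) = 0 := by simp
    have e2 : (∫ x, (s : Ω → ℝ) x * (2 * u x) ∂μ) = 2 * ∫ x, (s : Ω → ℝ) x * u x ∂μ := by
      rw [← integral_const_mul]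
      exact integral_congr_ae (ae_of_all _ fun x => by ring)
    rw [e0] at h0
    rw [e2] at h2
    have heq : (∫ x, (s : Ω → ℝ) x * u x ∂μ) = largestK μ K u := by linarith
    have hsub : ∀ v : Ω → ℝ, Integrable v μ →
        (∫ x, (s : Ω → ℝ) x * v x ∂μ) ≤ largestK μ K v := by
      intro v hv
      have hhv := h v hv
      rw [ge_iff_le, hsplit v hv, heq] at hhv
      linarith
    obtain ⟨hinf, hL1⟩ := (part1 s).mp hsub
    refine ⟨?_, heq⟩
    have hKinv : K⁻¹ * (∫⁻ x, ‖(s : Ω → ℝ) x‖₊ ∂μ) ≤ 1 := by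
      rw [← ENNReal.inv_mul_cancel hK0.ne' hKfin]
      exact mul_le_mul_right hL1 _
    refine le_antisymm (max_le hinf hKinv) ?_
    by_contra hcon
    push_neg at hcon
    rw [max_lt_iff] at hcon
    obtain ⟨ha, hb⟩ := hcon
    have hs0 : ¬ (((s : Ω → ℝ)) =ᵐ[μ] 0) := by
      intro hz
      have hz' : (fun x => (s : Ω → ℝ) x * u x) =ᵐ[μ] (fun _ => (0:ℝ)) :=
        hz.mono fun x hx => by simp [hx]
      have hzero : (∫ x, (s : Ω → ℝ) x * u x ∂μ) = 0 := by
        rw [integral_congr_ae hz', integral_zero]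
      rw [heq] at hzero
      exact hupos.ne' hzero
    have hL0 : (∫⁻ x, ‖(s : Ω → ℝ) x‖₊ ∂μ) ≠ 0 := by
      intro hz
      rw [lintegral_eq_zero_iff' hsm.aemeasurable.nnnorm.coe_nnreal_ennreal] at hz
      refine hs0 (hz.mono fun x hx => ?_)
      simpa using hx
    have ha0 : eLpNorm ((s : Ω → ℝ)) ∞ μ ≠ 0 := by
      intro hz
      exact hs0 ((eLpNorm_eq_zero_iff hsm (by simp)).mp hz)
    have hLK : (∫⁻ x, ‖(s : Ω → ℝ) x‖₊ ∂μ) < K := by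
      have hm := (ENNReal.mul_lt_mul_iff_right (a := K) hK0.ne' hKfin).mpr hb
      rwa [← mul_assoc, ENNReal.mul_inv_cancel hK0.ne' hKfin, one_mul, mul_one] at hm
    have hLfin : (∫⁻ x, ‖(s : Ω → ℝ) x‖₊ ∂μ) ≠ ∞ := (hLK.trans hKfin.lt_top).ne
    have hafin : eLpNorm ((s : Ω → ℝ)) ∞ μ ≠ ∞ := ne_top_of_lt ha
    set c := min (eLpNorm ((s : Ω → ℝ)) ∞ μ)⁻¹ (K / ∫⁻ x, ‖(s : Ω → ℝ) x‖₊ ∂μ) with hcdef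
    have hc1 : 1 < c := by
      refine lt_min (ENNReal.one_lt_inv.mpr ha) ?_
      refine (ENNReal.lt_div_iff_mul_lt (Or.inl hL0) (Or.inl hLfin)).mpr ?_
      rwa [one_mul]
    have hcfin : c ≠ ∞ :=
      ne_top_of_le_ne_top (ENNReal.inv_ne_top.mpr ha0) (min_le_left _ _)
    have hca : c * eLpNorm ((s : Ω → ℝ)) ∞ μ ≤ 1 := by
      calc c * eLpNorm ((s : Ω → ℝ)) ∞ μ
          ≤ (eLpNorm ((s : Ω → ℝ)) ∞ μ)⁻¹ * eLpNorm ((s : Ω → ℝ)) ∞ μ :=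
            mul_le_mul_left (min_le_left _ _) _
        _ = 1 := ENNReal.inv_mul_cancel ha0 hafin
    have hcL : c * (∫⁻ x, ‖(s : Ω → ℝ) x‖₊ ∂μ) ≤ K := by
      calc c * (∫⁻ x, ‖(s : Ω → ℝ) x‖₊ ∂μ)
          ≤ (K / ∫⁻ x, ‖(s : Ω → ℝ) x‖₊ ∂μ) * (∫⁻ x, ‖(s : Ω → ℝ) x‖₊ ∂μ) :=
            mul_le_mul_left (min_le_right _ _) _
        _ = K := ENNReal.div_mul_cancel hL0 hLfin
    set r := c.toReal with hrdef
    have hr0 : 0 ≤ r := ENNReal.toReal_nonneg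
    have hr1 : 1 < r := by
      have := (ENNReal.toReal_lt_toReal (by simp) hcfin).mpr hc1
      simpa using this
    have hrc : (‖r‖₊ : ℝ≥0∞) = c := by
      rw [Real.nnnorm_of_nonneg hr0, ← Real.toNNReal_of_nonneg hr0]
      exact ENNReal.ofReal_toReal hcfin
    have h1' : eLpNorm (fun x => r * (s : Ω → ℝ) x) ∞ μ ≤ 1 := by
      have he : eLpNorm (fun x => r * (s : Ω → ℝ) x) ∞ μ =
          (‖r‖₊ : ℝ≥0∞) * eLpNorm ((s : Ω → ℝ)) ∞ μ := by
        rw [show (fun x => r * (s : Ω → ℝ) x) = r • ((s : Ω → ℝ)) from rfl]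
        exact eLpNorm_const_smul r _ _ _
      rw [he, hrc]
      exact hca
    have h2' : (∫⁻ x, ‖r * (s : Ω → ℝ) x‖₊ ∂μ) ≤ K := by
      have hpt : ∀ x, (‖r * (s : Ω → ℝ) x‖₊ : ℝ≥0∞) =
          (‖r‖₊ : ℝ≥0∞) * (‖(s : Ω → ℝ) x‖₊ : ℝ≥0∞) := fun x => by
        rw [nnnorm_mul]
        push_cast
        ring
      calc (∫⁻ x, ‖r * (s : Ω → ℝ) x‖₊ ∂μ)
          = ∫⁻ x, (‖r‖₊ : ℝ≥0∞) * (‖(s : Ω → ℝ) x‖₊ : ℝ≥0∞) ∂μ := lintegral_congr hpt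
        _ = (‖r‖₊ : ℝ≥0∞) * ∫⁻ x, (‖(s : Ω → ℝ) x‖₊ : ℝ≥0∞) ∂μ :=
            lintegral_const_mul' _ _ (by simp)
        _ = c * ∫⁻ x, (‖(s : Ω → ℝ) x‖₊ : ℝ≥0∞) ∂μ := by rw [hrc]
        _ ≤ K := hcL
    have hmeas' : AEStronglyMeasurable (fun x => r * (s : Ω → ℝ) x) μ :=
      aestronglyMeasurable_const.mul hsm
    have hfinal := part1_bwd hμ hK0 hKfin hmeas' h1' h2' hu
    have hre : (∫ x, (r * (s : Ω → ℝ) x) * u x ∂μ) = r * ∫ x, (s : Ω → ℝ) x * u x ∂μ := by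
      rw [← integral_const_mul]
      exact integral_congr_ae (ae_of_all _ fun x => by ring)
    rw [hre, heq] at hfinal
    nlinarith
  · rintro ⟨hmax, heq⟩ v hv
    have hinf : eLpNorm ((s : Ω → ℝ)) ∞ μ ≤ 1 := le_of_le_of_eq (le_max_left _ _) hmax
    have hKi : K⁻¹ * (∫⁻ x, ‖(s : Ω → ℝ) x‖₊ ∂μ) ≤ 1 := le_of_le_of_eq (le_max_right _ _) hmax
    have hL : (∫⁻ x, ‖(s : Ω → ℝ) x‖₊ ∂μ) ≤ K := by
      have hm := mul_le_mul_right hKi K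
      rwa [← mul_assoc, ENNReal.mul_inv_cancel hK0.ne' hKfin, one_mul, mul_one] at hm
    have hb := part1_bwd hμ hK0 hKfin hsm hinf hL hv
    rw [ge_iff_le, hsplit v hv, heq]
    linarith
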